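/- For a positive integer $m$ and complex numbers $z_1, z_2$ not both zero, the sum over all pairs $(j,k)$ of natural numbers with $j+k \ge m$ of $\frac{e^{-m(|z_1|^2+|z_2|^2)}}{(|z_1|^2+|z_2|^2)^m}\cdot\frac{(j+k)!\,|z_1|^{2j}|z_2|^{2k}}{j!\,k!\,(j+k-m)!}\,m^{j+k-m+2}$ equals $m^2$. -/

import Mathlib

open Real

-- auxiliary: sum over a fiber
lemma aux_inner_sum (m n : ℕ) (a b : ℝ) (C : ℝ) :
    ∑ j : Fin (n + m + 1),
      C * ((n + m).factorial * a ^ (j : ℕ) * b ^ (n + m - (j : ℕ))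
          / ((j : ℕ).factorial * (n + m - (j : ℕ)).factorial * n.factorial))
      = C / n.factorial * (a + b) ^ (n + m) := by
  rw [Fin.sum_univ_eq_sum_range (fun j => C * ((n + m).factorial * a ^ j * b ^ (n + m - j)
      / ((j).factorial * (n + m - j).factorial * n.factorial)) : ℕ → ℝ), add_pow,
    Finset.mul_sum, Finset.sum_congr rfl]
  intro j hj
  rw [Finset.mem_range] at hj
  have hjle : j ≤ n + m := by omega
  rw [Nat.cast_choose ℝ hjle]
  have h1 : (j.factorial : ℝ) ≠ 0 := Nat.cast_ne_zero.mpr (Nat.factorial_ne_zero _)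
  have h2 : ((n + m - j).factorial : ℝ) ≠ 0 := Nat.cast_ne_zero.mpr (Nat.factorial_ne_zero _)
  have h3 : (n.factorial : ℝ) ≠ 0 := Nat.cast_ne_zero.mpr (Nat.factorial_ne_zero _)
  field_simp

theorem simanca_epsilon_constant (m : ℕ) (hm : 1 ≤ m) (z₁ z₂ : ℂ)
    (hz : (z₁, z₂) ≠ (0, 0)) :
    ∑' p : {p : ℕ × ℕ // m ≤ p.1 + p.2},
        Real.exp (-(m:ℝ) * (‖z₁‖^2 + ‖z₂‖^2))
          / (‖z₁‖^2 + ‖z₂‖^2)^m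
          * ((p.1.1 + p.1.2).factorial * ‖z₁‖^(2*p.1.1) * ‖z₂‖^(2*p.1.2)
              / (p.1.1.factorial * p.1.2.factorial * (p.1.1 + p.1.2 - m).factorial))
          * (m:ℝ)^(p.1.1 + p.1.2 - m + 2)
      = (m:ℝ)^2 := by
  set a : ℝ := ‖z₁‖ ^ 2 with ha
  set b : ℝ := ‖z₂‖ ^ 2 with hb
  have hz' : z₁ ≠ 0 ∨ z₂ ≠ 0 := by
    by_contra h
    push_neg at h
    exact hz (by rw [h.1, h.2])
  have hr : 0 < a + b := by
    rcases hz' with h | h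
    · exact add_pos_of_pos_of_nonneg (pow_pos (norm_pos_iff.mpr h) 2) (sq_nonneg _)
    · exact add_pos_of_nonneg_of_pos (sq_nonneg _) (pow_pos (norm_pos_iff.mpr h) 2)
  set r : ℝ := a + b with hrd
  -- the equivalence
  let e : (Σ n : ℕ, Fin (n + m + 1)) ≃ {p : ℕ × ℕ // m ≤ p.1 + p.2} :=
  { toFun := fun x => ⟨(x.2.1, x.1 + m - x.2.1), by have := x.2.isLt; omega⟩
    invFun := fun p => ⟨p.1.1 + p.1.2 - m, ⟨p.1.1, by have := p.2; omega⟩⟩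
    left_inv := fun x => by
      rcases x with ⟨n, j, hj⟩
      refine Sigma.ext (by simp; omega) ?_
      rw [Fin.heq_ext_iff (by simp; omega)]
    right_inv := fun p => by
      rcases p with ⟨⟨j, k⟩, hp⟩
      simp only [Subtype.mk.injEq, Prod.mk.injEq]
      simp at hp ⊢
      omega }
  rw [← e.tsum_eq]
  -- the function on the sigma type
  set f : (Σ n : ℕ, Fin (n + m + 1)) → ℝ := fun x =>
    Real.exp (-(m:ℝ) * r) / r ^ m
      * ((((e x).1.1 + (e x).1.2).factorial : ℝ) * ‖z₁‖ ^ (2 * (e x).1.1)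
          * ‖z₂‖ ^ (2 * (e x).1.2)
          / (((e x).1.1.factorial : ℝ) * (e x).1.2.factorial * ((e x).1.1 + (e x).1.2 - m).factorial))
      * (m:ℝ) ^ ((e x).1.1 + (e x).1.2 - m + 2) with hf
  have hfval : ∀ (n : ℕ) (j : Fin (n + m + 1)), f ⟨n, j⟩ =
      (Real.exp (-(m:ℝ) * r) / r ^ m * (m:ℝ) ^ (n + 2))
        * (((n + m).factorial : ℝ) * a ^ (j : ℕ) * b ^ (n + m - (j : ℕ))
            / (((j : ℕ).factorial : ℝ) * (n + m - (j : ℕ)).factorial * n.factorial)) := by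
    intro n j
    have hj : (j : ℕ) ≤ n + m := by have := j.isLt; omega
    have h1 : (j : ℕ) + (n + m - (j : ℕ)) = n + m := by omega
    have h4 : n + m - m = n := by omega
    simp only [hf, e, Equiv.coe_fn_mk]
    simp only [h1, h4]
    rw [ha, hb, pow_mul, pow_mul]
    ring
  have hfnn : ∀ x, 0 ≤ f x := by
    intro x
    rw [hf]
    positivity
  have hsum_fiber : ∀ n : ℕ, ∑' j : Fin (n + m + 1), f ⟨n, j⟩ =
      Real.exp (-(m:ℝ) * r) * (m:ℝ) ^ 2 * ((m * r) ^ n / n.factorial) := by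
    intro n
    rw [tsum_fintype]
    calc ∑ j : Fin (n + m + 1), f ⟨n, j⟩
        = ∑ j : Fin (n + m + 1),
            (Real.exp (-(m:ℝ) * r) / r ^ m * (m:ℝ) ^ (n + 2))
              * (((n + m).factorial : ℝ) * a ^ (j : ℕ) * b ^ (n + m - (j : ℕ))
                  / (((j : ℕ).factorial : ℝ) * (n + m - (j : ℕ)).factorial * n.factorial)) := by
          exact Finset.sum_congr rfl fun j _ => hfval n j
      _ = (Real.exp (-(m:ℝ) * r) / r ^ m * (m:ℝ) ^ (n + 2)) / n.factorial * (a + b) ^ (n + m) := by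
          exact aux_inner_sum m n a b _
      _ = Real.exp (-(m:ℝ) * r) * (m:ℝ) ^ 2 * ((m * r) ^ n / n.factorial) := by
          rw [← hrd, pow_add, pow_add, mul_pow]
          have hrm : r ^ m ≠ 0 := pow_ne_zero _ (ne_of_gt hr)
          field_simp
  have houter : Summable fun n : ℕ =>
      Real.exp (-(m:ℝ) * r) * (m:ℝ) ^ 2 * ((m * r) ^ n / n.factorial) :=
    (Real.summable_pow_div_factorial (m * r)).mul_left _
  have hsummable : Summable f := by
    rw [summable_sigma_of_nonneg hfnn]
    refine ⟨fun n => Summable.of_finite, ?_⟩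
    simpa only [hsum_fiber] using houter
  rw [Summable.tsum_sigma hsummable]
  simp only [hsum_fiber]
  have hexp : (∑' n : ℕ, ((m:ℝ) * r) ^ n / n.factorial) = Real.exp ((m:ℝ) * r) := by
    rw [Real.exp_eq_exp_ℝ]
    exact (congrFun (NormedSpace.exp_eq_tsum_div (𝔸 := ℝ)) _).symm
  rw [tsum_mul_left, hexp]
  have hcancel : Real.exp (-(m:ℝ) * r) * Real.exp ((m:ℝ) * r) = 1 := by
    rw [← Real.exp_add, show -(m:ℝ) * r + (m:ℝ) * r = 0 by ring, Real.exp_zero]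
  calc Real.exp (-(m:ℝ) * r) * (m:ℝ) ^ 2 * Real.exp ((m:ℝ) * r)
      = Real.exp (-(m:ℝ) * r) * Real.exp ((m:ℝ) * r) * (m:ℝ) ^ 2 := by ring
    _ = (m:ℝ) ^ 2 := by rw [hcancel, one_mul]
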